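/- Let P be a real-linear map on the real vector space of n×n complex Hermitian matrices that is positive (P maps positive-semidefinite matrices to positive-semidefinite matrices), unital (P(I) = I), and idempotent (P² = P), and suppose there exists a positive definite Hermitian matrix ρ such that tr(P(y)ρ) = tr(yρ) for all Hermitian y. Then P(x∘y) = P(x)∘P(y) for every Hermitian x with P(x) = x and every Hermitian y, where x∘y := ½(xy + yx). In particular, the range of P is closed under the Jordan product ∘. -/

import Mathlib

open scoped ComplexOrder

/-- The Jordan product `x ∘ y := ½(xy + yx)` of matrices. -/
noncomputable def jordan {n : ℕ} (x y : Matrix (Fin n) (Fin n) ℂ) :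
    Matrix (Fin n) (Fin n) ℂ :=
  (1 / 2 : ℂ) • (x * y + y * x)

section Aux
open Matrix
open scoped MatrixOrder

lemma quad_zero {a e : ℝ} (he : 0 ≤ e) (h : ∀ t : ℝ, 0 ≤ t * a + t^2 * e) : a = 0 := by
  have hpos : (0:ℝ) < e + 1 := by linarith
  have h1 := h (-a/(e+1))
  have h2 : -a/(e+1)*a + (-a/(e+1))^2*e = -(a^2)/(e+1)^2 := by
    field_simp
    ring
  rw [h2] at h1
  have h3 : a^2 ≤ 0 := by
    have hs : (0:ℝ) < (e+1)^2 := by positivity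
    have := (div_nonneg_iff).mp h1
    rcases this with ⟨hn, _⟩ | ⟨hn, hd⟩
    · nlinarith
    · nlinarith
  have := le_antisymm h3 (sq_nonneg a)
  exact pow_eq_zero_iff two_ne_zero |>.mp this

lemma re_ineq (α ε : ℂ) (t : ℝ) (h : 0 ≤ (t:ℂ) * α + ((t:ℂ))^2 * ε) :
    0 ≤ t * α.re + t^2 * ε.re := by
  have hre : ((t:ℂ)*α + ((t:ℂ))^2*ε).re = t*α.re + t^2*ε.re := by
    simp [Complex.add_re, Complex.mul_re, pow_two, Complex.mul_im]
  have := (Complex.le_def.mp h).1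
  rw [Complex.zero_re, hre] at this
  exact this

lemma im_zero (α ε : ℂ) (h : 0 ≤ α + ε) (hεim : ε.im = 0) : α.im = 0 := by
  have := (Complex.le_def.mp h).2
  simp only [Complex.zero_im, Complex.add_im, hεim, add_zero] at this
  exact this.symm


lemma entries_zero {n : ℕ} {A : Matrix (Fin n) (Fin n) ℂ}
    (h : (Aᴴ * A).trace = 0) : A = 0 := by
  have key : ((∑ j, ∑ k, Complex.normSq (A k j) : ℝ) : ℂ) = 0 := by
    rw [← h]
    simp only [Matrix.trace, Matrix.diag, Matrix.mul_apply, Matrix.conjTranspose_apply]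
    push_cast
    refine Finset.sum_congr rfl fun j _ => Finset.sum_congr rfl fun k _ => ?_
    rw [mul_comm]; exact (Complex.mul_conj _).symm
  have key2 : (∑ j, ∑ k, Complex.normSq (A k j) : ℝ) = 0 := by exact_mod_cast key
  have hz : ∀ j ∈ Finset.univ, ∀ k ∈ Finset.univ, Complex.normSq (A (k : Fin n) j) = 0 := by
    have h1 := (Finset.sum_eq_zero_iff_of_nonneg (fun j _ => Finset.sum_nonneg
      fun k _ => Complex.normSq_nonneg _)).mp key2
    intro j hj k hk
    exact (Finset.sum_eq_zero_iff_of_nonneg fun k _ => Complex.normSq_nonneg _).mp (h1 j hj) k hk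
  ext k j
  simpa using Complex.normSq_eq_zero.mp (hz j (Finset.mem_univ _) k (Finset.mem_univ _))

lemma trace_zero_of_psd {n : ℕ} {N : Matrix (Fin n) (Fin n) ℂ}
    (hN : N.PosSemidef) (h : N.trace = 0) : N = 0 := by
  have hr := CFC.sqrt_mul_sqrt_self N hN.nonneg
  have hherm : (CFC.sqrt N).IsHermitian := (CFC.sqrt_nonneg N).posSemidef.isHermitian
  have h2 : ((CFC.sqrt N)ᴴ * CFC.sqrt N).trace = 0 := by rw [hherm.eq, hr, h]
  have h3 : CFC.sqrt N = 0 := entries_zero h2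
  rw [← hr, h3, mul_zero]

lemma faithful {n : ℕ} {M ρ : Matrix (Fin n) (Fin n) ℂ}
    (hM : M.PosSemidef) (hρ : ρ.PosDef) (h : (M * ρ).trace = 0) : M = 0 := by
  set s := CFC.sqrt ρ with hs
  have hss : s * s = ρ := CFC.sqrt_mul_sqrt_self ρ hρ.posSemidef.nonneg
  have hsh : s.IsHermitian := (CFC.sqrt_nonneg ρ).posSemidef.isHermitian
  have h1 : (s * M * s).trace = 0 := by
    rw [Matrix.trace_mul_cycle, hss, Matrix.trace_mul_comm, h]
  have h2 : (s * M * s).PosSemidef := by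
    have := hM.conjTranspose_mul_mul_same s
    rwa [hsh.eq] at this
  have h3 : s * M * s = 0 := trace_zero_of_psd h2 h1
  set r := CFC.sqrt M with hr
  have hrr : r * r = M := CFC.sqrt_mul_sqrt_self M hM.nonneg
  have hrh : r.IsHermitian := (CFC.sqrt_nonneg M).posSemidef.isHermitian
  have h4 : (r * s)ᴴ * (r * s) = 0 := by
    rw [Matrix.conjTranspose_mul, hrh.eq, hsh.eq]
    calc s * r * (r * s) = s * (r * r) * s := by
          simp only [Matrix.mul_assoc]
    _ = 0 := by rw [hrr, h3]
  have h5 : r * s = 0 := Matrix.conjTranspose_mul_self_eq_zero.mp h4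
  have h6 : r * ρ = 0 := by rw [← hss, ← mul_assoc, h5, zero_mul]
  obtain ⟨u, hu⟩ := hρ.isUnit
  have h7 : r = 0 := by
    have h8 : r * ρ * (↑u⁻¹ : Matrix (Fin n) (Fin n) ℂ) = 0 := by rw [h6, zero_mul]
    rwa [mul_assoc, ← hu, Units.mul_inv, mul_one] at h8
  rw [← hrr, h7, zero_mul]


lemma psd_sum {n : ℕ} {ι : Type*} (s : Finset ι) (f : ι → Matrix (Fin n) (Fin n) ℂ)
    (h : ∀ i ∈ s, (f i).PosSemidef) : (∑ i ∈ s, f i).PosSemidef := by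
  classical
  induction s using Finset.induction_on with
  | empty => simpa using Matrix.PosSemidef.zero
  | insert a t hni ih =>
    rw [Finset.sum_insert hni]
    exact (h a (Finset.mem_insert_self a t)).add
      (ih fun i hi => h i (Finset.mem_insert_of_mem hi))

lemma kadison {n : ℕ} (P : Matrix (Fin n) (Fin n) ℂ →ₗ[ℝ] Matrix (Fin n) (Fin n) ℂ)
    (hherm : ∀ x : Matrix (Fin n) (Fin n) ℂ, x.IsHermitian → (P x).IsHermitian)
    (hpos : ∀ x : Matrix (Fin n) (Fin n) ℂ, x.PosSemidef → (P x).PosSemidef)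
    (hunital : P 1 = 1)
    {z : Matrix (Fin n) (Fin n) ℂ} (hz : z.IsHermitian) :
    (P (z * z) - P z * P z).PosSemidef := by
  classical
  set u : Matrix (Fin n) (Fin n) ℂ := (hz.eigenvectorUnitary : Matrix (Fin n) (Fin n) ℂ) with hu
  set lam : Fin n → ℝ := hz.eigenvalues with hlam
  have huu : u * star u = 1 := (Matrix.mem_unitaryGroup_iff).mp hz.eigenvectorUnitary.2
  have huu' : star u * u = 1 := (Matrix.mem_unitaryGroup_iff').mp hz.eigenvectorUnitary.2
  set d : Fin n → Matrix (Fin n) (Fin n) ℂ := fun i => Matrix.diagonal (Pi.single i 1) with hd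
  set e : Fin n → Matrix (Fin n) (Fin n) ℂ := fun i => u * d i * star u with he
  have hdsum : ∑ i, d i = 1 := by
    rw [hd]
    ext j k
    by_cases hjk : j = k <;>
      simp [Matrix.sum_apply, Matrix.diagonal_apply, Pi.single_apply, Matrix.one_apply, hjk]
  have hesum : ∑ i, e i = 1 := by
    rw [he]
    simp only
    rw [← Finset.sum_mul, ← Finset.mul_sum, hdsum, mul_one, huu]
  have hconj : ∀ f : Fin n → ℝ, u * Matrix.diagonal (fun j => (f j : ℂ)) * star u
      = ∑ i, (f i : ℂ) • e i := by
    intro f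
    have h1 : Matrix.diagonal (fun j => (f j : ℂ)) = ∑ i, (f i : ℂ) • d i := by
      rw [hd]
      ext j k
      by_cases hjk : j = k <;>
        simp [Matrix.sum_apply, Matrix.diagonal_apply, Pi.single_apply, hjk]
    rw [h1, Finset.mul_sum, Finset.sum_mul]
    refine Finset.sum_congr rfl fun i _ => ?_
    rw [he]
    simp [Matrix.mul_smul, Matrix.smul_mul]
  have hspec : z = u * Matrix.diagonal (fun j => (lam j : ℂ)) * star u := hz.spectral_theorem
  have hze : z = ∑ i, (lam i : ℂ) • e i := by rw [hspec, hconj]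
  have hz2 : z * z = ∑ i, ((lam i : ℂ))^2 • e i := by
    conv_lhs => rw [hspec]
    have h3 : (u * Matrix.diagonal (fun j => (lam j:ℂ)) * star u)
        * (u * Matrix.diagonal (fun j => (lam j:ℂ)) * star u)
        = u * Matrix.diagonal (fun j => ((lam j * lam j : ℝ) : ℂ)) * star u := by
      simp only [Matrix.mul_assoc]
      rw [← Matrix.mul_assoc (star u) u, huu', Matrix.one_mul,
        ← Matrix.mul_assoc (Matrix.diagonal _) (Matrix.diagonal _), Matrix.diagonal_mul_diagonal]
      congr 2
      funext j
      simp [Pi.mul_apply]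
    rw [h3, hconj]
    refine Finset.sum_congr rfl fun i _ => ?_
    push_cast
    rw [pow_two]
  -- positivity data
  have hdpsd : ∀ i, (d i).PosSemidef := by
    intro i
    rw [hd]
    refine Matrix.posSemidef_diagonal_iff.mpr fun j => ?_
    by_cases hij : j = i <;> simp [Pi.single_apply, hij]
  have hepsd : ∀ i, (e i).PosSemidef := by
    intro i
    have := (hdpsd i).mul_mul_conjTranspose_same u
    simpa [he, Matrix.star_eq_conjTranspose] using this
  set a : Fin n → Matrix (Fin n) (Fin n) ℂ := fun i => P (e i) with ha
  have hapsd : ∀ i, (a i).PosSemidef := fun i => hpos _ (hepsd i)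
  have hasum : ∑ i, a i = 1 := by
    rw [ha, ← map_sum, hesum, hunital]
  have smul_comm' : ∀ (r : ℝ) (A : Matrix (Fin n) (Fin n) ℂ),
      P ((r : ℂ) • A) = (r : ℂ) • P A := by
    intro r A
    rw [← Complex.coe_algebraMap, algebraMap_smul, P.map_smul, algebraMap_smul]
  have hb : P z = ∑ i, (lam i : ℂ) • a i := by
    conv_lhs => rw [hze]
    rw [map_sum]
    exact Finset.sum_congr rfl fun i _ => smul_comm' (lam i) (e i)
  have hPz2 : P (z * z) = ∑ i, ((lam i : ℂ))^2 • a i := by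
    conv_lhs => rw [hz2]
    rw [map_sum]
    refine Finset.sum_congr rfl fun i _ => ?_
    rw [show ((lam i : ℂ))^2 = ((lam i ^ 2 : ℝ) : ℂ) by push_cast; ring]
    exact smul_comm' _ _
  set b : Matrix (Fin n) (Fin n) ℂ := P z with hbdef
  have hbherm : b.IsHermitian := hherm z hz
  set c : Fin n → Matrix (Fin n) (Fin n) ℂ := fun i => (lam i : ℂ) • 1 - b with hc
  have hcherm : ∀ i, (c i)ᴴ = c i := by
    intro i
    rw [hc]
    simp [Matrix.conjTranspose_sub, Matrix.conjTranspose_smul, Complex.star_def,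
      Complex.conj_ofReal, hbherm.eq]
  have hterm_psd : ∀ i, (c i * a i * c i).PosSemidef := by
    intro i
    have := (hapsd i).mul_mul_conjTranspose_same (c i)
    rwa [hcherm i] at this
  have hkey : ∑ i, c i * a i * c i = P (z * z) - b * b := by
    have hexp : ∀ i, c i * a i * c i
        = ((lam i:ℂ))^2 • a i - ((lam i:ℂ)) • (b * a i) - ((lam i:ℂ)) • (a i * b)
          + b * a i * b := by
      intro i
      rw [hc]
      simp only [Matrix.sub_mul, Matrix.mul_sub, Matrix.smul_mul, Matrix.mul_smul,
        Matrix.one_mul, Matrix.mul_one]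
      module
    rw [Finset.sum_congr rfl fun i _ => hexp i]
    rw [Finset.sum_add_distrib, Finset.sum_sub_distrib, Finset.sum_sub_distrib]
    have e1 : ∑ i, ((lam i:ℂ)) • (b * a i) = b * b := by
      calc ∑ i, ((lam i:ℂ)) • (b * a i) = ∑ i, b * (((lam i:ℂ)) • a i) :=
            Finset.sum_congr rfl fun i _ => (mul_smul_comm _ _ _).symm
      _ = b * ∑ i, ((lam i:ℂ)) • a i := (Finset.mul_sum _ _ _).symm
      _ = b * b := by rw [← hb]
    have e2 : ∑ i, ((lam i:ℂ)) • (a i * b) = b * b := by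
      calc ∑ i, ((lam i:ℂ)) • (a i * b) = ∑ i, (((lam i:ℂ)) • a i) * b :=
            Finset.sum_congr rfl fun i _ => (smul_mul_assoc _ _ _).symm
      _ = (∑ i, ((lam i:ℂ)) • a i) * b := (Finset.sum_mul _ _ _).symm
      _ = b * b := by rw [← hb]
    have e3 : ∑ i, b * a i * b = b * b := by
      calc ∑ i, b * a i * b = (∑ i, b * a i) * b := (Finset.sum_mul _ _ _).symm
      _ = (b * ∑ i, a i) * b := by rw [Finset.mul_sum]
      _ = b * b := by rw [hasum, mul_one]
    rw [e1, e2, e3, ← hPz2]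
    abel
  have hSpsd : (∑ i, c i * a i * c i).PosSemidef :=
    psd_sum _ _ fun i _ => hterm_psd i
  rw [hkey] at hSpsd
  exact hSpsd


lemma herm_quad_zero {n : ℕ} {A : Matrix (Fin n) (Fin n) ℂ} (hA : A.IsHermitian)
    (h : ∀ v : Fin n → ℂ, dotProduct (star v) (A *ᵥ v) = 0) : A = 0 := by
  have hpsd : A.PosSemidef := .of_dotProduct_mulVec_nonneg hA fun v => by rw [h v]
  have htr : A.trace = 0 := by
    have hdiag : ∀ i, A i i = 0 := by
      intro i
      have := h (Pi.single i 1)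
      simpa [dotProduct, Matrix.mulVec, Pi.single_apply, Finset.sum_ite_eq] using this
    simp [Matrix.trace, Matrix.diag, hdiag]
  exact trace_zero_of_psd hpsd htr

lemma jordan_herm {n : ℕ} {x y : Matrix (Fin n) (Fin n) ℂ}
    (hx : x.IsHermitian) (hy : y.IsHermitian) : (jordan x y).IsHermitian := by
  unfold jordan Matrix.IsHermitian
  rw [Matrix.conjTranspose_smul, Matrix.conjTranspose_add, Matrix.conjTranspose_mul,
    Matrix.conjTranspose_mul, hx.eq, hy.eq, add_comm (y * x)]
  congr 1
  simp [Complex.star_def, map_div₀]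

end Aux

/-- Let `P` be a real-linear map on the real vector space of `n × n`
complex Hermitian matrices (realized as a real-linear map on all matrices sending
Hermitian matrices to Hermitian matrices) that is positive, unital and idempotent,
and suppose there is a positive definite Hermitian matrix `ρ` with
`tr(P(y)ρ) = tr(yρ)` for all Hermitian `y`.  Then `P(x∘y) = P(x)∘P(y)` for every
Hermitian `x` with `P(x) = x` and every Hermitian `y`; in particular, the range of `P`
(on Hermitian matrices) is closed under the Jordan product `∘`. -/
theorem projection_jordan_homomorphism (n : ℕ)
    (P : Matrix (Fin n) (Fin n) ℂ →ₗ[ℝ] Matrix (Fin n) (Fin n) ℂ)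
    (hherm : ∀ x : Matrix (Fin n) (Fin n) ℂ, x.IsHermitian → (P x).IsHermitian)
    (hpos : ∀ x : Matrix (Fin n) (Fin n) ℂ, x.PosSemidef → (P x).PosSemidef)
    (hunital : P 1 = 1)
    (hidem : ∀ y : Matrix (Fin n) (Fin n) ℂ, y.IsHermitian → P (P y) = P y)
    (ρ : Matrix (Fin n) (Fin n) ℂ) (hρ : ρ.PosDef)
    (htr : ∀ y : Matrix (Fin n) (Fin n) ℂ, y.IsHermitian →
      (P y * ρ).trace = (y * ρ).trace) :
    (∀ x y : Matrix (Fin n) (Fin n) ℂ, x.IsHermitian → y.IsHermitian → P x = x →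
        P (jordan x y) = jordan (P x) (P y))
      ∧ ∀ a ∈ P '' {x : Matrix (Fin n) (Fin n) ℂ | x.IsHermitian},
          ∀ b ∈ P '' {x : Matrix (Fin n) (Fin n) ℂ | x.IsHermitian},
            jordan a b ∈ P '' {x : Matrix (Fin n) (Fin n) ℂ | x.IsHermitian} := by
  have smul_comm' : ∀ (r : ℝ) (A : Matrix (Fin n) (Fin n) ℂ),
      P ((r : ℂ) • A) = (r : ℂ) • P A := by
    intro r A
    rw [← Complex.coe_algebraMap, algebraMap_smul, P.map_smul, algebraMap_smul]
  -- Step B: fixed points are closed under squaring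
  have fixed_sq : ∀ x : Matrix (Fin n) (Fin n) ℂ, x.IsHermitian → P x = x →
      P (x * x) = x * x := by
    intro x hx hfix
    have hxx : (x * x).IsHermitian := by
      unfold Matrix.IsHermitian
      rw [Matrix.conjTranspose_mul, hx.eq]
    have hpsdM : (P (x * x) - x * x).PosSemidef := by
      have := kadison P hherm hpos hunital hx
      rwa [hfix] at this
    have htrM : ((P (x * x) - x * x) * ρ).trace = 0 := by
      rw [Matrix.sub_mul, Matrix.trace_sub, htr _ hxx, sub_self]
    exact sub_eq_zero.mp (faithful hpsdM hρ htrM)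
  -- Step C: main multiplicativity
  have main : ∀ x y : Matrix (Fin n) (Fin n) ℂ, x.IsHermitian → y.IsHermitian → P x = x →
      P (x * y + y * x) = P x * P y + P y * P x := by
    intro x y hx hy hfix
    set A : Matrix (Fin n) (Fin n) ℂ := P (x * y + y * x) - (P x * P y + P y * P x) with hA
    have hxyherm : (x * y + y * x).IsHermitian := by
      unfold Matrix.IsHermitian
      rw [Matrix.conjTranspose_add, Matrix.conjTranspose_mul, Matrix.conjTranspose_mul,
        hx.eq, hy.eq, add_comm]
    have hAherm : A.IsHermitian := by
      rw [hA]
      unfold Matrix.IsHermitian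
      rw [Matrix.conjTranspose_sub, (hherm _ hxyherm).eq, Matrix.conjTranspose_add,
        Matrix.conjTranspose_mul, Matrix.conjTranspose_mul,
        (hherm _ hx).eq, (hherm _ hy).eq, add_comm (P y * P x)]
    set E : Matrix (Fin n) (Fin n) ℂ := P (y * y) - P y * P y with hE
    have hEpsd : E.PosSemidef := kadison P hherm hpos hunital hy
    have hsq : P (x * x) = P x * P x := by rw [hfix]; exact fixed_sq x hx hfix
    have hPSD : ∀ t : ℝ, ((t : ℂ) • A + ((t : ℂ))^2 • E).PosSemidef := by
      intro t
      set z : Matrix (Fin n) (Fin n) ℂ := x + (t : ℂ) • y with hz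
      have hzherm : z.IsHermitian := by
        rw [hz]
        unfold Matrix.IsHermitian
        rw [Matrix.conjTranspose_add, Matrix.conjTranspose_smul, hx.eq, hy.eq,
          Complex.star_def, Complex.conj_ofReal]
      have hK := kadison P hherm hpos hunital hzherm
      have hzz : z * z = x * x + (t:ℂ) • (x * y + y * x) + ((t:ℂ))^2 • (y * y) := by
        rw [hz]
        simp only [add_mul, mul_add, smul_mul_assoc, mul_smul_comm, smul_smul]
        module
      have hPzz : P (z * z) = P (x * x) + (t:ℂ) • P (x * y + y * x)
          + ((t:ℂ))^2 • P (y * y) := by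
        rw [hzz, map_add, map_add, smul_comm',
          show ((t:ℂ))^2 = ((t^2 : ℝ) : ℂ) by push_cast; ring, smul_comm']
      have hPz : P z = P x + (t:ℂ) • P y := by rw [hz, map_add, smul_comm']
      have hPzPz : P z * P z = P x * P x + (t:ℂ) • (P x * P y + P y * P x)
          + ((t:ℂ))^2 • (P y * P y) := by
        rw [hPz]
        simp only [add_mul, mul_add, smul_mul_assoc, mul_smul_comm, smul_smul]
        module
      have hdiff : P (z * z) - P z * P z = (t : ℂ) • A + ((t : ℂ))^2 • E := by
        rw [hPzz, hPzPz, hsq, hA, hE]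
        simp only [smul_sub]
        abel
      rwa [hdiff] at hK
    have hAzero : A = 0 := by
      refine herm_quad_zero hAherm fun v => ?_
      set α : ℂ := dotProduct (star v) (A.mulVec v) with hα
      set ε : ℂ := dotProduct (star v) (E.mulVec v) with hε
      have hεnn : 0 ≤ ε := hEpsd.dotProduct_mulVec_nonneg v
      have hεim : ε.im = 0 := ((Complex.le_def.mp hεnn).2).symm
      have hquad : ∀ t : ℝ, 0 ≤ (t:ℂ) * α + ((t:ℂ))^2 * ε := by
        intro t
        have hq := (hPSD t).dotProduct_mulVec_nonneg v
        rwa [Matrix.add_mulVec, Matrix.smul_mulVec, Matrix.smul_mulVec,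
          dotProduct_add, dotProduct_smul, dotProduct_smul,
          smul_eq_mul, smul_eq_mul] at hq
      have him : α.im = 0 := by
        have h1 := hquad 1
        simp only [Complex.ofReal_one, one_mul, one_pow] at h1
        exact im_zero α ε h1 hεim
      have hre : α.re = 0 := by
        refine quad_zero (by exact (Complex.le_def.mp hεnn).1) fun t => ?_
        exact re_ineq α ε t (hquad t)
      rw [hα] at hre him
      exact Complex.ext hre him
    rw [← sub_eq_zero]
    exact hAzero
  -- assemble the two conclusions
  have part1 : ∀ x y : Matrix (Fin n) (Fin n) ℂ, x.IsHermitian → y.IsHermitian → P x = x →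
      P (jordan x y) = jordan (P x) (P y) := by
    intro x y hx hy hfix
    have hhalf : ((1/2 : ℝ) : ℂ) = (1/2 : ℂ) := by norm_num
    unfold jordan
    rw [← hhalf, smul_comm', main x y hx hy hfix]
  refine ⟨part1, ?_⟩
  rintro a ⟨xa, hxa, rfl⟩ b ⟨xb, hxb, rfl⟩
  have hfa : P (P xa) = P xa := hidem xa hxa
  have hPa : (P xa).IsHermitian := hherm xa hxa
  refine ⟨jordan (P xa) xb, jordan_herm hPa hxb, ?_⟩
  rw [part1 (P xa) xb hPa hxb hfa, hfa]
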